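/- arXiv:2205.08137 — 5 statements merged into one kernel-verified Lean document; each statement's English description precedes it below -/
import Mathlib

section
/- Let A₁ and A₂ be real n×n symmetric matrices, and let λᵢ(M) denote the i-th smallest eigenvalue of a symmetric matrix M. Then for each 1 ≤ i ≤ n and each 0 ≤ j ≤ n−i, one has λᵢ(A₁+A₂) ≤ λ_{i+j}(A₁) + λ_{n−j}(A₂). -/
/-- The eigenvalues of a Hermitian matrix, sorted in ascending order. -/
noncomputable def sortedEig {n : ℕ} {A : Matrix (Fin n) (Fin n) ℝ}
    (hA : A.IsHermitian) : Fin n → ℝ :=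
  hA.eigenvalues ∘ Tuple.sort hA.eigenvalues

namespace WeylAux

open Matrix Finset Submodule

variable {n : ℕ}

local notation "⟪" x ", " y "⟫" => inner (𝕜 := ℝ) x y

/-- The eigenvector basis, permuted so that eigenvalues are ascending. -/
noncomputable def sBasis {A : Matrix (Fin n) (Fin n) ℝ}
    (hA : A.IsHermitian) : Fin n → EuclideanSpace ℝ (Fin n) :=
  fun k => hA.eigenvectorBasis (Tuple.sort hA.eigenvalues k)

lemma sBasis_orthonormal {A : Matrix (Fin n) (Fin n) ℝ} (hA : A.IsHermitian) :
    Orthonormal ℝ (sBasis hA) :=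
  hA.eigenvectorBasis.orthonormal.comp _ (Equiv.injective _)

lemma sBasis_eigen {A : Matrix (Fin n) (Fin n) ℝ} (hA : A.IsHermitian) (k : Fin n) :
    Matrix.toEuclideanLin A (sBasis hA k) = sortedEig hA k • sBasis hA k := by
  have h := hA.mulVec_eigenvectorBasis (Tuple.sort hA.eigenvalues k)
  apply (WithLp.equiv 2 (Fin n → ℝ)).injective
  simpa [Matrix.ofLp_toEuclideanLin_apply, sBasis, sortedEig] using h

lemma sortedEig_monotone {A : Matrix (Fin n) (Fin n) ℝ} (hA : A.IsHermitian) :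
    Monotone (sortedEig hA) :=
  Tuple.monotone_sort hA.eigenvalues

lemma repr_lemma (v : Fin n → EuclideanSpace ℝ (Fin n)) (hv : Orthonormal ℝ v)
    (μ : Fin n → ℝ) (A : Matrix (Fin n) (Fin n) ℝ)
    (heig : ∀ k, Matrix.toEuclideanLin A (v k) = μ k • v k)
    (S : Finset (Fin n)) (x : EuclideanSpace ℝ (Fin n))
    (hx : x ∈ Submodule.span ℝ (v '' S)) :
    ∃ c : Fin n → ℝ,
      ⟪x, Matrix.toEuclideanLin A x⟫ = ∑ k ∈ S, μ k * (c k)^2 ∧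
      ⟪x, x⟫ = ∑ k ∈ S, (c k)^2 := by
  classical
  rw [Set.image_eq_range] at hx
  obtain ⟨c, hc⟩ := (mem_span_range_iff_exists_fun ℝ).mp hx
  set c' : Fin n → ℝ := fun k => if h : k ∈ S then c ⟨k, h⟩ else 0 with hc'
  have hxc : x = ∑ k ∈ S, c' k • v k := by
    rw [← hc, ← Finset.sum_coe_sort S (fun k => c' k • v k)]
    exact Finset.sum_congr rfl fun k _ => by simp [hc', k.2]
  have hTx : Matrix.toEuclideanLin A x = ∑ k ∈ S, (c' k * μ k) • v k := by
    rw [hxc, map_sum]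
    exact Finset.sum_congr rfl fun k _ => by
      rw [_root_.map_smul, heig k, smul_smul]
  refine ⟨c', ?_, ?_⟩
  · rw [hTx]
    conv_lhs => rw [hxc]
    rw [hv.inner_sum c' (fun k => c' k * μ k) S]
    exact Finset.sum_congr rfl fun k _ => by
      simp only [starRingEnd_apply, star_trivial]; ring
  · conv_lhs => rw [hxc]
    rw [hv.inner_sum c' c' S]
    exact Finset.sum_congr rfl fun k _ => by
      simp only [starRingEnd_apply, star_trivial]; ring

lemma rayleigh_upper {A : Matrix (Fin n) (Fin n) ℝ} (hA : A.IsHermitian)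
    (m : Fin n) (x : EuclideanSpace ℝ (Fin n))
    (hx : x ∈ Submodule.span ℝ (sBasis hA '' Finset.Iic m)) :
    ⟪x, Matrix.toEuclideanLin A x⟫ ≤ sortedEig hA m * ⟪x, x⟫ := by
  obtain ⟨c, h1, h2⟩ := repr_lemma (sBasis hA) (sBasis_orthonormal hA)
    (sortedEig hA) A (sBasis_eigen hA) (Finset.Iic m) x hx
  rw [h1, h2, Finset.mul_sum]
  exact Finset.sum_le_sum fun k hk =>
    mul_le_mul_of_nonneg_right (sortedEig_monotone hA (Finset.mem_Iic.mp hk))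
      (sq_nonneg _)

lemma rayleigh_lower {A : Matrix (Fin n) (Fin n) ℝ} (hA : A.IsHermitian)
    (m : Fin n) (x : EuclideanSpace ℝ (Fin n))
    (hx : x ∈ Submodule.span ℝ (sBasis hA '' Finset.Ici m)) :
    sortedEig hA m * ⟪x, x⟫ ≤ ⟪x, Matrix.toEuclideanLin A x⟫ := by
  obtain ⟨c, h1, h2⟩ := repr_lemma (sBasis hA) (sBasis_orthonormal hA)
    (sortedEig hA) A (sBasis_eigen hA) (Finset.Ici m) x hx
  rw [h1, h2, Finset.mul_sum]
  exact Finset.sum_le_sum fun k hk =>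
    mul_le_mul_of_nonneg_right (sortedEig_monotone hA (Finset.mem_Ici.mp hk))
      (sq_nonneg _)

lemma finrank_span_orthonormal (v : Fin n → EuclideanSpace ℝ (Fin n))
    (hv : Orthonormal ℝ v) (S : Finset (Fin n)) :
    Module.finrank ℝ (Submodule.span ℝ (v '' S)) = S.card := by
  rw [Set.image_eq_range]
  rw [finrank_span_eq_card (show LinearIndependent ℝ
    (fun k : ↥(↑S : Set (Fin n)) => v ↑k) from
      hv.linearIndependent.comp _ Subtype.val_injective)]
  exact Fintype.card_coe S

lemma inf_finrank (V W : Submodule ℝ (EuclideanSpace ℝ (Fin n))) :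
    Module.finrank ℝ V + Module.finrank ℝ W ≤ Module.finrank ℝ ↥(V ⊓ W) + n := by
  have h := Submodule.finrank_sup_add_finrank_inf_eq V W
  have h2 : Module.finrank ℝ ↥(V ⊔ W) ≤ n := by
    simpa using Submodule.finrank_le (V ⊔ W)
  omega

end WeylAux

/-- Weyl's inequality (upper bound form): for real symmetric matrices `A₁`, `A₂`,
`λᵢ(A₁+A₂) ≤ λ_{i+j}(A₁) + λ_{n−j}(A₂)` for `1 ≤ i ≤ n`, `0 ≤ j ≤ n − i`
(1-based indexing, eigenvalues in ascending order). -/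
theorem weyl_upper {n : ℕ} (A₁ A₂ : Matrix (Fin n) (Fin n) ℝ)
    (h₁ : A₁.IsHermitian) (h₂ : A₂.IsHermitian)
    (i j : ℕ) (hi1 : 1 ≤ i) (hin : i ≤ n) (hj : j ≤ n - i) :
    sortedEig (h₁.add h₂) ⟨i - 1, by omega⟩ ≤
      sortedEig h₁ ⟨i + j - 1, by omega⟩ + sortedEig h₂ ⟨n - j - 1, by omega⟩ := by
  classical
  open WeylAux Submodule Module in
  set h₁₂ := h₁.add h₂
  set a : Fin n := ⟨i - 1, by omega⟩
  set b : Fin n := ⟨i + j - 1, by omega⟩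
  set d : Fin n := ⟨n - j - 1, by omega⟩
  set V₁ : Submodule ℝ (EuclideanSpace ℝ (Fin n)) :=
    Submodule.span ℝ (sBasis h₁₂ '' Finset.Ici a)
  set V₂ : Submodule ℝ (EuclideanSpace ℝ (Fin n)) :=
    Submodule.span ℝ (sBasis h₁ '' Finset.Iic b)
  set V₃ : Submodule ℝ (EuclideanSpace ℝ (Fin n)) :=
    Submodule.span ℝ (sBasis h₂ '' Finset.Iic d)
  have hr1 : Module.finrank ℝ V₁ = n - (i - 1) := by
    rw [finrank_span_orthonormal _ (sBasis_orthonormal h₁₂)]; exact Fin.card_Ici a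
  have hr2 : Module.finrank ℝ V₂ = (i + j - 1) + 1 := by
    rw [finrank_span_orthonormal _ (sBasis_orthonormal h₁)]; exact Fin.card_Iic b
  have hr3 : Module.finrank ℝ V₃ = (n - j - 1) + 1 := by
    rw [finrank_span_orthonormal _ (sBasis_orthonormal h₂)]; exact Fin.card_Iic d
  have hd1 := inf_finrank V₁ V₂
  have hd2 := inf_finrank (V₁ ⊓ V₂) V₃
  have hpos : 0 < Module.finrank ℝ ↥(V₁ ⊓ V₂ ⊓ V₃) := by omega
  obtain ⟨⟨x, hxmem⟩, hxne⟩ := Module.finrank_pos_iff_exists_ne_zero.mp hpos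
  have hx0 : x ≠ 0 := fun h => hxne (Subtype.ext h)
  obtain ⟨⟨hx1, hx2⟩, hx3⟩ : (x ∈ V₁ ∧ x ∈ V₂) ∧ x ∈ V₃ := hxmem
  have hip : (0:ℝ) < inner (𝕜 := ℝ) x x := by
    rw [real_inner_self_eq_norm_sq]
    exact pow_pos (norm_pos_iff.mpr hx0) 2
  have hlow := rayleigh_lower h₁₂ a x hx1
  have hup1 := rayleigh_upper h₁ b x hx2
  have hup2 := rayleigh_upper h₂ d x hx3
  have hadd : Matrix.toEuclideanLin (A₁ + A₂) x
      = Matrix.toEuclideanLin A₁ x + Matrix.toEuclideanLin A₂ x := by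
    rw [map_add]; rfl
  have key : sortedEig h₁₂ a * inner (𝕜 := ℝ) x x
      ≤ (sortedEig h₁ b + sortedEig h₂ d) * inner (𝕜 := ℝ) x x := by
    calc sortedEig h₁₂ a * inner (𝕜 := ℝ) x x
        ≤ inner (𝕜 := ℝ) x (Matrix.toEuclideanLin (A₁ + A₂) x) := hlow
      _ = inner (𝕜 := ℝ) x (Matrix.toEuclideanLin A₁ x)
          + inner (𝕜 := ℝ) x (Matrix.toEuclideanLin A₂ x) := by
            rw [hadd, inner_add_right]
      _ ≤ sortedEig h₁ b * inner (𝕜 := ℝ) x x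
          + sortedEig h₂ d * inner (𝕜 := ℝ) x x := add_le_add hup1 hup2
      _ = (sortedEig h₁ b + sortedEig h₂ d) * inner (𝕜 := ℝ) x x := by ring
  exact le_of_mul_le_mul_right (by simpa [mul_comm] using key) hip
end

section
/- Let A = diag(a₁,…,aₙ) with 0 < a₁ ≤ … ≤ aₙ, let u : ℝ → ℝ be C², and set s = (1/2)∑ᵢ aᵢ xᵢ² and U(x) = u(s). If u'(s) > 0 and u''(s) ≤ 0, then for each 1 ≤ i ≤ n the i-th smallest eigenvalue of the Hessian D²U(x) satisfies aᵢ u'(s) + (∑ⱼ aⱼ² xⱼ²) u''(s) ≤ λᵢ(D²U(x)) ≤ aᵢ u'(s). -/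
open Finset Module Matrix

section aux

variable {n : ℕ}

/-- The coordinate subspace of vectors supported on `{k | p k}`. -/
def coordSubmodule (p : Fin n → Prop) : Submodule ℝ (Fin n → ℝ) where
  carrier := {w | ∀ k, ¬ p k → w k = 0}
  add_mem' := by intro u v hu hv k hk; simp [hu k hk, hv k hk]
  zero_mem' := by intro k _; rfl
  smul_mem' := by intro c v hv k hk; simp [hv k hk]

lemma card_le_finrank_coord (p : Fin n → Prop) [DecidablePred p] :
    Fintype.card {k // p k} ≤ finrank ℝ (coordSubmodule p) := by
  classical
  set g : {k // p k} → (Fin n → ℝ) := fun k => Pi.single (k : Fin n) (1 : ℝ) with hg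
  have hli : LinearIndependent ℝ g := by
    have h1 := (Pi.basisFun ℝ (Fin n)).linearIndependent
    have h2 := h1.comp (Subtype.val : {k // p k} → Fin n) Subtype.val_injective
    convert h2 using 1
    funext k
    simp [hg, Pi.basisFun_apply]
  have hspan : Submodule.span ℝ (Set.range g) ≤ coordSubmodule p := by
    rw [Submodule.span_le]
    rintro _ ⟨k, rfl⟩ m hm
    have hne : (k : Fin n) ≠ m := fun h => hm (h ▸ k.2)
    exact Pi.single_eq_of_ne (Ne.symm hne) 1
  calc Fintype.card {k // p k}
      = finrank ℝ (Submodule.span ℝ (Set.range g)) := (finrank_span_eq_card hli).symm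
    _ ≤ finrank ℝ (coordSubmodule p) := Submodule.finrank_mono hspan

/-- Orthonormal-expansion product formula. -/
lemma sum_mul_expand (v : Fin n → (Fin n → ℝ))
    (horth : ∀ p q, ∑ m, v p m * v q m = if p = q then (1:ℝ) else 0)
    (c d : Fin n → ℝ) :
    ∑ m, (∑ j, c j • v j) m * (∑ k, d k • v k) m = ∑ j, c j * d j := by
  classical
  have : ∀ m, (∑ j, c j • v j) m * (∑ k, d k • v k) m
      = ∑ j, ∑ k, c j * d k * (v j m * v k m) := by
    intro m
    simp only [Finset.sum_apply, Pi.smul_apply, smul_eq_mul, Finset.sum_mul_sum]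
    congr 1; funext j; congr 1; funext k; ring
  simp only [this]
  rw [Finset.sum_comm]
  have : ∀ j, ∑ m, ∑ k, c j * d k * (v j m * v k m) = c j * d j := by
    intro j
    rw [Finset.sum_comm]
    have : ∀ k, ∑ m, c j * d k * (v j m * v k m) = c j * d k * (if j = k then (1:ℝ) else 0) := by
      intro k
      rw [← Finset.mul_sum, horth]
    simp only [this, mul_ite, mul_one, mul_zero]
    simp
  simp only [this]

/-- Dimension-counting witness: a nonzero vector in `F` lying in the span of the
eigenvectors indexed (after sorting) by `T`. -/
lemma exists_witness {M : Matrix (Fin n) (Fin n) ℝ} (hMH : M.IsHermitian)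
    (T : Finset (Fin n)) (F : Submodule ℝ (Fin n → ℝ))
    (hdim : n < T.card + finrank ℝ F) :
    ∃ (w c : Fin n → ℝ), w ≠ 0 ∧ w ∈ F ∧ (∀ j ∉ T, c j = 0) ∧
      (∑ j, w j ^ 2) = ∑ j, c j ^ 2 ∧
      (∑ j, w j * (M *ᵥ w) j)
        = ∑ j, (hMH.eigenvalues (Tuple.sort hMH.eigenvalues j)) * c j ^ 2 := by
  classical
  set π := Tuple.sort hMH.eigenvalues with hπ
  set b := hMH.eigenvectorBasis with hb
  set v : Fin n → (Fin n → ℝ) := fun j => ⇑(b (π j)) with hv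
  have horth : ∀ p q, ∑ m, v p m * v q m = if p = q then (1:ℝ) else 0 := by
    intro p q
    have h1 := b.orthonormal
    rw [orthonormal_iff_ite] at h1
    have h2 := h1 (π p) (π q)
    simp only [PiLp.inner_apply, RCLike.inner_apply, conj_trivial] at h2
    have h3 : (if π p = π q then (1:ℝ) else 0) = if p = q then 1 else 0 := by
      simp [Equiv.apply_eq_iff_eq]
    rw [← h3, ← h2]
    exact Finset.sum_congr rfl (fun m _ => mul_comm _ _)
  have heig : ∀ j, M *ᵥ v j = hMH.eigenvalues (π j) • v j := fun j =>
    hMH.mulVec_eigenvectorBasis (π j)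
  -- linear independence of v
  have hli : LinearIndependent ℝ v := by
    rw [Fintype.linearIndependent_iff]
    intro c hc j
    have hdj : (∑ k, (fun k => if k = j then (1:ℝ) else 0) k • v k) = v j := by
      simp [ite_smul, Finset.sum_ite_eq']
    have h := sum_mul_expand v horth c (fun k => if k = j then 1 else 0)
    rw [hdj, hc] at h
    simp only [mul_ite, mul_one, mul_zero, Finset.sum_ite_eq', mem_univ, if_true] at h
    simpa using h.symm
  set g : {j // j ∈ T} → (Fin n → ℝ) := fun j => v j with hgdef
  have hlig : LinearIndependent ℝ g := hli.comp _ Subtype.val_injective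
  set E := Submodule.span ℝ (Set.range g) with hE
  have hEfr : finrank ℝ E = T.card := by
    rw [hE, finrank_span_eq_card hlig, Fintype.card_coe]
  -- intersection
  have hwhole : finrank ℝ (Fin n → ℝ) = n := by
    simp [Module.finrank_fintype_fun_eq_card]
  have hsum := Submodule.finrank_sup_add_finrank_inf_eq E F
  have hsup : finrank ℝ ↥(E ⊔ F) ≤ n := by
    have h := Submodule.finrank_le (E ⊔ F)
    rwa [hwhole] at h
  have hpos : 0 < finrank ℝ ↥(E ⊓ F) := by omega
  haveI := Module.finrank_pos_iff.mp hpos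
  obtain ⟨⟨w, hwEF⟩, hw0'⟩ := exists_ne (0 : ↥(E ⊓ F))
  have hw0 : w ≠ 0 := fun h => hw0' (Subtype.ext h)
  have hwE : w ∈ E := (Submodule.mem_inf.mp hwEF).1
  have hwF : w ∈ F := (Submodule.mem_inf.mp hwEF).2
  rw [hE, Submodule.mem_span_range_iff_exists_fun] at hwE
  obtain ⟨c0, hc0⟩ := hwE
  set c : Fin n → ℝ := fun j => if h : j ∈ T then c0 ⟨j, h⟩ else 0 with hcdef
  have hcz : ∀ j ∉ T, c j = 0 := by intro j hj; simp [hcdef, hj]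
  have hwsum : w = ∑ j, c j • v j := by
    rw [← hc0]
    rw [← Finset.sum_subset (Finset.subset_univ T) (by intro j _ hj; simp [hcdef, hj])]
    rw [← Finset.sum_attach T (fun j => c j • v j)]
    congr 1
    funext j
    simp [hcdef, j.2, hgdef]
  refine ⟨w, c, hw0, hwF, hcz, ?_, ?_⟩
  · have := sum_mul_expand v horth c c
    rw [← hwsum] at this
    simpa [sq] using this
  · have hMw : M *ᵥ w = ∑ j, (c j * hMH.eigenvalues (π j)) • v j := by
      rw [hwsum]
      rw [show (M *ᵥ ∑ j, c j • v j) = ∑ j, M *ᵥ (c j • v j) by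
        have h := map_sum M.mulVecLin (fun j => c j • v j) univ
        simpa only [Matrix.mulVecLin_apply] using h]
      congr 1
      funext j
      rw [Matrix.mulVec_smul, heig j, smul_smul, mul_comm]
    have := sum_mul_expand v horth c (fun j => c j * hMH.eigenvalues (π j))
    rw [← hwsum] at this
    rw [show (∑ k, (fun j => c j * hMH.eigenvalues (π j)) k • v k) = M *ᵥ w from hMw.symm] at this
    rw [this]
    congr 1
    funext j
    ring

/-- Quadratic form of the Hessian matrix. -/
lemma quad_eq (a x w : Fin n → ℝ) (t e : ℝ) (M : Matrix (Fin n) (Fin n) ℝ)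
    (hM : M = fun i j => a i * (if i = j then (1:ℝ) else 0) * t
        + a i * a j * x i * x j * e) :
    ∑ j, w j * (M *ᵥ w) j
      = t * (∑ j, a j * w j ^ 2) + e * (∑ j, a j * x j * w j) ^ 2 := by
  classical
  subst hM
  have hrow : ∀ m, ((fun i j => a i * (if i = j then (1:ℝ) else 0) * t
      + a i * a j * x i * x j * e) *ᵥ w) m
      = a m * t * w m + a m * x m * e * (∑ j, a j * x j * w j) := by
    intro m
    simp only [Matrix.mulVec, dotProduct, add_mul, Finset.sum_add_distrib]
    congr 1
    · simp [mul_ite, ite_mul, Finset.sum_ite_eq]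
    · rw [Finset.mul_sum]
      congr 1; funext j; ring
  simp only [hrow]
  have key : ∀ j, w j * (a j * t * w j + a j * x j * e * (∑ k, a k * x k * w k))
      = t * (a j * w j ^ 2) + (e * (∑ k, a k * x k * w k)) * (a j * x j * w j) := by
    intro j; ring
  simp only [key]
  rw [Finset.sum_add_distrib, ← Finset.mul_sum, ← Finset.mul_sum]
  ring

end aux

/-- If `U(x) = u(s)`, `s = (1/2)∑ᵢ aᵢxᵢ²`, `0 < a₁ ≤ … ≤ aₙ`, `u'(s) > 0` and
`u''(s) ≤ 0`, then the `i`-th smallest eigenvalue of the Hessian `D²U(x)`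
(whose entries are `aᵢδᵢⱼu'(s) + aᵢaⱼxᵢxⱼu''(s)`) satisfies
`aᵢu'(s) + (∑ⱼ aⱼ²xⱼ²) u''(s) ≤ λᵢ(D²U(x)) ≤ aᵢu'(s)`. -/
theorem eigenvalue_bounds_subsolution_case {n : ℕ} (a : Fin n → ℝ)
    (ha : ∀ i, 0 < a i) (hamono : Monotone a)
    (u : ℝ → ℝ) (hu : ContDiff ℝ 2 u) (x : Fin n → ℝ)
    (s : ℝ) (hs : s = (1/2) * ∑ k, a k * x k ^ 2)
    (hu' : 0 < deriv u s) (hu'' : deriv (deriv u) s ≤ 0)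
    (M : Matrix (Fin n) (Fin n) ℝ)
    (hM : M = fun i j => a i * (if i = j then (1:ℝ) else 0) * deriv u s
        + a i * a j * x i * x j * deriv (deriv u) s)
    (hMH : M.IsHermitian) (i : Fin n) :
    a i * deriv u s + (∑ k, (a k) ^ 2 * (x k) ^ 2) * deriv (deriv u) s
        ≤ sortedEig hMH i ∧ sortedEig hMH i ≤ a i * deriv u s := by
  classical
  set t := deriv u s with ht
  set e := deriv (deriv u) s with he
  set K := ∑ k, (a k) ^ 2 * (x k) ^ 2 with hK
  have hμmono : Monotone (sortedEig hMH) := Tuple.monotone_sort hMH.eigenvalues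
  have hμdef : ∀ j, hMH.eigenvalues (Tuple.sort hMH.eigenvalues j) = sortedEig hMH j :=
    fun j => rfl
  constructor
  · -- lower bound
    obtain ⟨w, c, hw0, hwF, hcz, hsq, hquad⟩ := exists_witness hMH (Finset.Iic i)
      (coordSubmodule (fun k => i ≤ k)) (by
        have h1 : Fintype.card {k : Fin n // i ≤ k}
            ≤ finrank ℝ (coordSubmodule (fun k : Fin n => i ≤ k)) :=
          card_le_finrank_coord _
        have h2 : Fintype.card {k : Fin n // i ≤ k} = n - i.val := by
          rw [Fintype.card_congr
            ((Equiv.subtypeEquivRight (fun k => by simp [Set.mem_Ici])) :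
              {k : Fin n // i ≤ k} ≃ {k : Fin n // k ∈ Set.Ici i})]
          rw [Fintype.card_subtype, ← Fin.card_Ici]
          congr 1; ext; simp
        have h3 := i.isLt
        rw [Fin.card_Iic]
        omega)
    have hSpos : 0 < ∑ j, w j ^ 2 := by
      have hex : ∃ j, w j ≠ 0 := by
        by_contra h
        push_neg at h
        exact hw0 (funext h)
      obtain ⟨j, hj⟩ := hex
      exact Finset.sum_pos' (fun k _ => sq_nonneg _) ⟨j, mem_univ j, by positivity⟩
    have hQle : ∑ j, hMH.eigenvalues (Tuple.sort hMH.eigenvalues j) * c j ^ 2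
        ≤ sortedEig hMH i * ∑ j, c j ^ 2 := by
      rw [Finset.mul_sum]
      apply Finset.sum_le_sum
      intro j _
      by_cases hj : j ∈ Finset.Iic i
      · rw [hμdef]
        exact mul_le_mul_of_nonneg_right (hμmono (Finset.mem_Iic.mp hj)) (sq_nonneg _)
      · simp [hcz j hj]
    have hQ := quad_eq a x w t e M hM
    have hA1 : a i * (∑ j, w j ^ 2) ≤ ∑ j, a j * w j ^ 2 := by
      rw [Finset.mul_sum]
      apply Finset.sum_le_sum
      intro j _
      by_cases hj : i ≤ j
      · exact mul_le_mul_of_nonneg_right (hamono hj) (sq_nonneg _)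
      · rw [hwF j hj]
        simp
    have hCS : (∑ j, a j * x j * w j) ^ 2 ≤ K * ∑ j, w j ^ 2 := by
      have h := Finset.sum_mul_sq_le_sq_mul_sq univ (fun j => a j * x j) w
      have hKeq : (∑ j, (a j * x j) ^ 2) = K := by
        rw [hK]; congr 1; funext j; ring
      rw [hKeq] at h
      exact h
    have hmain : (a i * t + K * e) * (∑ j, w j ^ 2) ≤ sortedEig hMH i * ∑ j, w j ^ 2 := by
      calc (a i * t + K * e) * (∑ j, w j ^ 2)
          = t * (a i * (∑ j, w j ^ 2)) + e * (K * (∑ j, w j ^ 2)) := by ring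
        _ ≤ t * (∑ j, a j * w j ^ 2) + e * (∑ j, a j * x j * w j) ^ 2 :=
            add_le_add (mul_le_mul_of_nonneg_left hA1 hu'.le)
              (mul_le_mul_of_nonpos_left hCS hu'')
        _ = ∑ j, w j * (M *ᵥ w) j := hQ.symm
        _ = ∑ j, hMH.eigenvalues (Tuple.sort hMH.eigenvalues j) * c j ^ 2 := hquad
        _ ≤ sortedEig hMH i * ∑ j, c j ^ 2 := hQle
        _ = sortedEig hMH i * ∑ j, w j ^ 2 := by rw [hsq]
    exact le_of_mul_le_mul_right hmain hSpos
  · -- upper bound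
    obtain ⟨w, c, hw0, hwF, hcz, hsq, hquad⟩ := exists_witness hMH (Finset.Ici i)
      (coordSubmodule (fun k => k ≤ i)) (by
        have h1 : Fintype.card {k : Fin n // k ≤ i}
            ≤ finrank ℝ (coordSubmodule (fun k : Fin n => k ≤ i)) :=
          card_le_finrank_coord _
        have h2 : Fintype.card {k : Fin n // k ≤ i} = i.val + 1 := by
          rw [Fintype.card_congr
            ((Equiv.subtypeEquivRight (fun k => by simp [Set.mem_Iic])) :
              {k : Fin n // k ≤ i} ≃ {k : Fin n // k ∈ Set.Iic i})]
          rw [Fintype.card_subtype, ← Fin.card_Iic]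
          congr 1; ext; simp
        have h3 := i.isLt
        rw [Fin.card_Ici]
        omega)
    have hSpos : 0 < ∑ j, w j ^ 2 := by
      have hex : ∃ j, w j ≠ 0 := by
        by_contra h
        push_neg at h
        exact hw0 (funext h)
      obtain ⟨j, hj⟩ := hex
      exact Finset.sum_pos' (fun k _ => sq_nonneg _) ⟨j, mem_univ j, by positivity⟩
    have hQge : sortedEig hMH i * ∑ j, c j ^ 2
        ≤ ∑ j, hMH.eigenvalues (Tuple.sort hMH.eigenvalues j) * c j ^ 2 := by
      rw [Finset.mul_sum]
      apply Finset.sum_le_sum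
      intro j _
      by_cases hj : j ∈ Finset.Ici i
      · rw [hμdef]
        exact mul_le_mul_of_nonneg_right (hμmono (Finset.mem_Ici.mp hj)) (sq_nonneg _)
      · simp [hcz j hj]
    have hQ := quad_eq a x w t e M hM
    have hA1 : ∑ j, a j * w j ^ 2 ≤ a i * (∑ j, w j ^ 2) := by
      rw [Finset.mul_sum]
      apply Finset.sum_le_sum
      intro j _
      by_cases hj : j ≤ i
      · exact mul_le_mul_of_nonneg_right (hamono hj) (sq_nonneg _)
      · rw [hwF j hj]
        simp
    have hmain : sortedEig hMH i * ∑ j, w j ^ 2 ≤ (a i * t) * (∑ j, w j ^ 2) := by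
      calc sortedEig hMH i * ∑ j, w j ^ 2
          = sortedEig hMH i * ∑ j, c j ^ 2 := by rw [hsq]
        _ ≤ ∑ j, hMH.eigenvalues (Tuple.sort hMH.eigenvalues j) * c j ^ 2 := hQge
        _ = ∑ j, w j * (M *ᵥ w) j := hquad.symm
        _ = t * (∑ j, a j * w j ^ 2) + e * (∑ j, a j * x j * w j) ^ 2 := hQ
        _ ≤ t * (a i * (∑ j, w j ^ 2)) + 0 :=
            add_le_add (mul_le_mul_of_nonneg_left hA1 hu'.le)
              (mul_nonpos_of_nonpos_of_nonneg hu'' (sq_nonneg _))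
        _ = (a i * t) * (∑ j, w j ^ 2) := by ring
    exact le_of_mul_le_mul_right hmain hSpos
end

section
/- Let Γ ⊂ ℝⁿ be an open convex symmetric cone with vertex at the origin containing the positive cone Γ⁺ = {λ : λᵢ > 0 for all i}. Then Γ is contained in the half-space Γ₁ = {λ ∈ ℝⁿ : ∑ᵢ λᵢ > 0}. -/
/-- An open convex symmetric proper cone `Γ ⊂ ℝⁿ` with vertex at the origin
containing the positive cone `Γ⁺` is contained in the half-space
`Γ₁ = {λ : ∑ᵢ λᵢ > 0}`. -/
theorem cone_subset_halfspace {n : ℕ} (Γ : Set (Fin n → ℝ))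
    (hopen : IsOpen Γ) (hconv : Convex ℝ Γ)
    (hsym : ∀ σ : Equiv.Perm (Fin n), ∀ v ∈ Γ, (v ∘ σ) ∈ Γ)
    (hcone : ∀ t : ℝ, 0 < t → ∀ v ∈ Γ, t • v ∈ Γ)
    (hpos : {v : Fin n → ℝ | ∀ i, 0 < v i} ⊆ Γ)
    (hproper : Γ ≠ Set.univ) :
    Γ ⊆ {v : Fin n → ℝ | 0 < ∑ i, v i} := by
  rcases Nat.eq_zero_or_pos n with hn | hn
  · subst hn
    exfalso
    apply hproper
    rw [Set.eq_univ_iff_forall]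
    intro u
    apply hpos
    intro i
    exact i.elim0
  intro v hv
  by_contra hle
  simp only [Set.mem_setOf_eq, not_lt] at hle
  set k : ℝ := (Fintype.card (Equiv.Perm (Fin n)) : ℝ) with hkdef
  have hk : 0 < k := by
    simpa [hkdef] using Fintype.card_pos (α := Equiv.Perm (Fin n))
  set c : Fin n → ℝ := ∑ σ : Equiv.Perm (Fin n), k⁻¹ • (v ∘ σ) with hcdef
  have hc : c ∈ Γ := by
    apply hconv.sum_mem (fun _ _ => by positivity)
    · simp only [Finset.sum_const, Finset.card_univ, nsmul_eq_mul]
      rw [← hkdef, mul_inv_cancel₀ (ne_of_gt hk)]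
    · exact fun σ _ => hsym σ v hv
  have hcapp : ∀ i, c i = k⁻¹ * ∑ σ : Equiv.Perm (Fin n), v (σ i) := by
    intro i
    simp [hcdef, Finset.sum_apply, Finset.mul_sum]
  have hconst : ∀ i j : Fin n, c i = c j := by
    intro i j
    rw [hcapp, hcapp]
    congr 1
    exact Fintype.sum_equiv (Equiv.mulRight (Equiv.swap i j))
      (fun σ => v (σ i)) (fun σ => v (σ j))
      (fun σ => by simp)
  have hsumc : ∑ i, c i = ∑ i, v i := by
    simp only [hcapp, ← Finset.mul_sum]
    rw [Finset.sum_comm]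
    have : ∀ σ : Equiv.Perm (Fin n), ∑ i, v (σ i) = ∑ i, v i :=
      fun σ => Equiv.sum_comp σ v
    simp only [this, Finset.sum_const, Finset.card_univ, nsmul_eq_mul]
    field_simp
    rw [hkdef]
  set i0 : Fin n := ⟨0, hn⟩
  have hci0 : c i0 ≤ 0 := by
    have h1 : (n : ℝ) * c i0 = ∑ i, c i := by
      rw [Finset.sum_congr rfl (fun i _ => hconst i i0)]
      simp [Finset.sum_const, Finset.card_univ, mul_comm]
    nlinarith [hsumc, (Nat.cast_pos (α := ℝ)).mpr hn]
  obtain ⟨ε, hε, hball⟩ := Metric.isOpen_iff.mp hopen c hc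
  set b : ℝ := c i0 - ε / 2 with hbdef
  have hb : b < 0 := by
    have h2 : 0 < ε / 2 := by linarith
    calc b = c i0 - ε / 2 := hbdef
    _ < 0 := by linarith
  set d : Fin n → ℝ := fun _ => b with hddef
  have hd : d ∈ Γ := by
    apply hball
    rw [Metric.mem_ball]
    have hle' : dist d c ≤ ε / 2 := by
      rw [dist_pi_le_iff (by linarith)]
      intro i
      have : c i = c i0 := hconst i i0
      simp [hddef, hbdef, Real.dist_eq, this]
      rw [abs_of_pos hε]
    linarith
  exfalso
  apply hproper
  rw [Set.eq_univ_iff_forall]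
  intro u
  set t : ℝ := (2 * ‖u‖ + 1) / (-b) with htdef
  have ht : 0 < t := by
    apply div_pos
    · positivity
    · linarith
  have htb : t * (-b) = 2 * ‖u‖ + 1 := by
    rw [htdef, div_mul_cancel₀ _ (by linarith : -b ≠ 0)]
  have hp : (2 • u - t • d) ∈ Γ := by
    apply hpos
    intro i
    have hui : -‖u‖ ≤ u i := by
      have := norm_le_pi_norm u i
      rw [Real.norm_eq_abs] at this
      linarith [abs_le.mp this]
    have : (2 • u - t • d) i = 2 * u i + t * (-b) := by
      simp [hddef]
      ring
    rw [this, htb]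
    linarith
  have hcomb := hconv (hcone t ht d hd) hp
    (by norm_num : (0:ℝ) ≤ 1/2) (by norm_num : (0:ℝ) ≤ 1/2) (by norm_num)
  have heq : (1/2 : ℝ) • (t • d) + (1/2 : ℝ) • (2 • u - t • d) = u := by
    funext i
    simp
    ring
  rwa [heq] at hcomb
end

section
/- Let f : Γ → ℝ be C¹ on an open convex symmetric cone Γ ⊃ Γ⁺, with ∂f/∂λᵢ > 0 on Γ, satisfying λ·∇f(λ) ≥ ν(f(λ)) for a positive increasing ν, and satisfying limsup_{λ→λ₀} f(λ) < r for every λ₀ ∈ ∂Γ, where r > 0 is given. Then for every λ ∈ Γ, there exists a unique t₁ > 0 such that f(t₁λ) = r. -/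
open Filter

/-- If `f` is `C¹` on an open convex symmetric cone `Γ ⊃ Γ⁺` with positive partial
derivatives, satisfies `λ·∇f(λ) ≥ ν(f(λ))` for a positive increasing `ν`, and
`limsup_{λ→λ₀} f(λ) < r` for every boundary point `λ₀` of `Γ`, then for every
`λ ∈ Γ` there is a unique `t₁ > 0` with `f(t₁λ) = r`. -/
theorem exists_unique_ray_level {n : ℕ} (Γ : Set (Fin n → ℝ))
    (hopen : IsOpen Γ) (hconv : Convex ℝ Γ)
    (hsym : ∀ σ : Equiv.Perm (Fin n), ∀ v ∈ Γ, (v ∘ σ) ∈ Γ)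
    (hcone : ∀ t : ℝ, 0 < t → ∀ v ∈ Γ, t • v ∈ Γ)
    (hpos : {v : Fin n → ℝ | ∀ i, 0 < v i} ⊆ Γ)
    (f : (Fin n → ℝ) → ℝ) (hf : ContDiffOn ℝ 1 f Γ)
    (hderiv : ∀ v ∈ Γ, ∀ i, 0 < fderiv ℝ f v (Pi.single i 1))
    (ν : ℝ → ℝ) (hν : ∀ t, 0 < ν t) (hνmono : Monotone ν)
    (hstruct : ∀ v ∈ Γ, ν (f v) ≤ fderiv ℝ f v v)
    (r : ℝ) (hr : 0 < r)
    (hbdry : ∀ v₀ ∈ frontier Γ, limsup f (nhdsWithin v₀ Γ) < r) :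
    ∀ v ∈ Γ, ∃! t₁ : ℝ, 0 < t₁ ∧ f (t₁ • v) = r := by
  intro v hv
  -- `0 ∉ Γ`
  have h0 : (0 : Fin n → ℝ) ∉ Γ := by
    intro h
    have h1 := hstruct 0 h
    rw [map_zero] at h1
    exact absurd (lt_of_lt_of_le (hν (f 0)) h1) (lt_irrefl _)
  have hdiff : ∀ w ∈ Γ, DifferentiableAt ℝ f w := fun w hw =>
    (hf.differentiableOn one_ne_zero).differentiableAt (hopen.mem_nhds hw)
  have hmem : ∀ t : ℝ, 0 < t → t • v ∈ Γ := fun t ht => hcone t ht v hv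
  -- derivative of `t ↦ f (t • v)`
  have hgderiv : ∀ t : ℝ, 0 < t →
      HasDerivAt (fun s : ℝ => f (s • v)) (fderiv ℝ f (t • v) v) t := by
    intro t ht
    have h1 : HasDerivAt (fun s : ℝ => s • v) v t := by
      simpa using (hasDerivAt_id t).smul_const v
    exact ((hdiff _ (hmem t ht)).hasFDerivAt).comp_hasDerivAt t h1
  have hkey : ∀ t : ℝ, 0 < t →
      fderiv ℝ f (t • v) (t • v) = t * fderiv ℝ f (t • v) v := by
    intro t ht
    rw [map_smul]
    simp
  have hderpos : ∀ t : ℝ, 0 < t → 0 < fderiv ℝ f (t • v) v := by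
    intro t ht
    have h2 := lt_of_lt_of_le (hν _) (hstruct _ (hmem t ht))
    rw [hkey t ht] at h2
    by_contra h
    push_neg at h
    nlinarith
  -- strict monotonicity of `t ↦ f (t • v)` on `(0, ∞)`
  have hsm : StrictMonoOn (fun s : ℝ => f (s • v)) (Set.Ioi 0) := by
    apply strictMonoOn_of_deriv_pos (convex_Ioi 0)
    · exact fun t ht => (hgderiv t ht).continuousAt.continuousWithinAt
    · intro t ht
      rw [interior_Ioi] at ht
      rw [(hgderiv t ht).deriv]
      exact hderpos t ht
  -- monotonicity of `f` in the direction `e = (1,…,1)`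
  set e : Fin n → ℝ := fun _ => (1:ℝ) with he
  have hsum : ∀ w ∈ Γ, 0 ≤ fderiv ℝ f w e := by
    intro w hw
    have h1 : e = ∑ i, Pi.single i (1:ℝ) := by
      funext j
      simp [he, Finset.sum_apply, Pi.single_apply]
    rw [h1, map_sum]
    exact Finset.sum_nonneg fun i _ => (hderiv w hw i).le
  have hadd : ∀ a ∈ Γ, ∀ b ∈ Γ, a + b ∈ Γ := by
    intro a ha b hb
    have h1 : (1/2 : ℝ) • a + (1/2 : ℝ) • b ∈ Γ :=
      hconv ha hb (by norm_num) (by norm_num) (by norm_num)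
    have h2 := hcone 2 (by norm_num) _ h1
    have h3 : (2:ℝ) • ((1/2 : ℝ) • a + (1/2 : ℝ) • b) = a + b := by
      module
    rwa [h3] at h2
  have hmonoe : ∀ w ∈ Γ, f w ≤ f (w + e) := by
    intro w hw
    have hmemφ : ∀ s : ℝ, s ∈ Set.Icc (0:ℝ) 1 → w + s • e ∈ Γ := by
      intro s hs
      rcases eq_or_lt_of_le hs.1 with h | h
      · simpa [← h] using hw
      · exact hadd w hw _ (hpos fun i => by simpa [he] using h)
    have hφ : ∀ s : ℝ, s ∈ Set.Icc (0:ℝ) 1 →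
        HasDerivAt (fun s : ℝ => f (w + s • e)) (fderiv ℝ f (w + s • e) e) s := by
      intro s hs
      have h1 : HasDerivAt (fun s : ℝ => w + s • e) e s := by
        simpa using ((hasDerivAt_id s).smul_const e).const_add w
      exact ((hdiff _ (hmemφ s hs)).hasFDerivAt).comp_hasDerivAt s h1
    have hmono : MonotoneOn (fun s : ℝ => f (w + s • e)) (Set.Icc 0 1) := by
      apply monotoneOn_of_deriv_nonneg (convex_Icc 0 1)
      · exact fun s hs => (hφ s hs).continuousAt.continuousWithinAt
      · intro s hs
        exact ((hφ s (interior_subset hs)).differentiableAt).differentiableWithinAt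
      · intro s hs
        rw [(hφ s (interior_subset hs)).deriv]
        exact hsum _ (hmemφ s (interior_subset hs))
    have h2 := hmono (Set.left_mem_Icc.mpr zero_le_one)
      (Set.right_mem_Icc.mpr zero_le_one) zero_le_one
    simpa using h2
  -- bound for `f` near `0` inside `Γ`
  have hK : IsCompact (Set.Icc (fun _ => (1/2:ℝ)) (fun _ => (3/2:ℝ)) : Set (Fin n → ℝ)) :=
    isCompact_Icc
  have hKΓ : (Set.Icc (fun _ => (1/2:ℝ)) (fun _ => (3/2:ℝ)) : Set (Fin n → ℝ)) ⊆ Γ := by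
    intro w hw
    exact hpos fun i => lt_of_lt_of_le (by norm_num) (hw.1 i)
  obtain ⟨M, hM⟩ := (hK.image_of_continuousOn ((hf.continuousOn).mono hKΓ)).bddAbove
  have hMsmall : ∀ w ∈ Γ, (∀ i, |w i| < 1/2) → f w ≤ M := by
    intro w hw hsmall
    refine le_trans (hmonoe w hw) (hM ⟨w + e, ?_, rfl⟩)
    refine Set.mem_Icc.mpr ⟨fun i => ?_, fun i => ?_⟩
    · have h1 := (abs_lt.mp (hsmall i)).1
      simp only [Pi.add_apply, he]
      linarith
    · have h1 := (abs_lt.mp (hsmall i)).2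
      simp only [Pi.add_apply, he]
      linarith
  -- `0` is on the boundary
  have htend0 : Tendsto (fun t : ℝ => t • v) (nhdsWithin 0 (Set.Ioi 0)) (nhds 0) := by
    have h1 : Tendsto (fun t : ℝ => t • v) (nhds 0) (nhds ((0:ℝ) • v)) :=
      ((continuous_id.smul continuous_const).tendsto 0)
    rw [zero_smul] at h1
    exact h1.mono_left nhdsWithin_le_nhds
  have h0cl : (0 : Fin n → ℝ) ∈ frontier Γ := by
    refine ⟨?_, by rwa [hopen.interior_eq]⟩
    exact mem_closure_of_tendsto htend0
      (Filter.eventually_of_mem self_mem_nhdsWithin fun t ht => hmem t ht)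
  have hbd : Filter.IsBoundedUnder (· ≤ ·) (nhdsWithin 0 Γ) f := by
    refine ⟨M, ?_⟩
    rw [Filter.eventually_map]
    filter_upwards [nhdsWithin_le_nhds
      (Metric.ball_mem_nhds (0 : Fin n → ℝ) (by norm_num : (0:ℝ) < 1/2)),
      self_mem_nhdsWithin] with w hwball hwΓ
    refine hMsmall w hwΓ fun i => ?_
    have h1 : ‖w‖ < 1/2 := by simpa using mem_ball_zero_iff.mp hwball
    calc |w i| = ‖w i‖ := (Real.norm_eq_abs _).symm
      _ ≤ ‖w‖ := norm_le_pi_norm w i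
      _ < 1/2 := h1
  have hev : ∀ᶠ w in nhdsWithin 0 Γ, f w < r :=
    Filter.eventually_lt_of_limsup_lt (hbdry 0 h0cl) hbd
  have hray : Tendsto (fun t : ℝ => t • v) (nhdsWithin 0 (Set.Ioi 0)) (nhdsWithin 0 Γ) := by
    rw [tendsto_nhdsWithin_iff]
    exact ⟨htend0, Filter.eventually_of_mem self_mem_nhdsWithin fun t ht => hmem t ht⟩
  obtain ⟨t₀, ht₀r, ht₀pos⟩ := ((hray.eventually hev).and self_mem_nhdsWithin).exists
  -- growth along the ray
  set c := ν (f v) with hc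
  have hcpos : 0 < c := hν _
  have hlog : ∀ t : ℝ, 1 ≤ t → f v + c * Real.log t ≤ f (t • v) := by
    intro t ht
    have hDD : ∀ s : ℝ, 0 < s →
        HasDerivAt (fun s : ℝ => f (s • v) - c * Real.log s)
          (fderiv ℝ f (s • v) v - c * s⁻¹) s := by
      intro s hs1
      exact (hgderiv s hs1).sub ((Real.hasDerivAt_log (ne_of_gt hs1)).const_mul c)
    have hmono : MonotoneOn (fun s : ℝ => f (s • v) - c * Real.log s) (Set.Ici 1) := by
      apply monotoneOn_of_deriv_nonneg (convex_Ici 1)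
      · intro s hs
        exact (hDD s (lt_of_lt_of_le one_pos hs)).continuousAt.continuousWithinAt
      · intro s hs
        rw [interior_Ici] at hs
        exact (hDD s (lt_trans one_pos hs)).differentiableAt.differentiableWithinAt
      · intro s hs
        rw [interior_Ici] at hs
        have hs1 : (0:ℝ) < s := lt_trans one_pos hs
        rw [(hDD s hs1).deriv]
        have h2 : ν (f (s • v)) ≤ fderiv ℝ f (s • v) (s • v) := hstruct _ (hmem s hs1)
        have h3 : c ≤ ν (f (s • v)) := by
          apply hνmono
          have h4 := hsm (Set.mem_Ioi.mpr one_pos) (Set.mem_Ioi.mpr hs1) hs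
          simpa using h4.le
        have h4 : c ≤ s * fderiv ℝ f (s • v) v := by
          rw [← hkey s hs1]; exact le_trans h3 h2
        have h5 : c * s⁻¹ ≤ fderiv ℝ f (s • v) v := by
          calc c * s⁻¹ ≤ (s * fderiv ℝ f (s • v) v) * s⁻¹ :=
                mul_le_mul_of_nonneg_right h4 (inv_nonneg.mpr hs1.le)
            _ = fderiv ℝ f (s • v) v := by field_simp
        linarith
    have h6 := hmono (Set.self_mem_Ici) (Set.mem_Ici.mpr ht) ht
    simp only [one_smul, Real.log_one, mul_zero, sub_zero] at h6
    linarith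
  -- a large time where `f` exceeds `r`
  set T : ℝ := max (max t₀ 1) (Real.exp ((r - f v) / c)) with hT
  have hT1 : (1:ℝ) ≤ T := le_trans (le_max_right t₀ 1) (le_max_left _ _)
  have hTt₀ : t₀ ≤ T := le_trans (le_max_left t₀ 1) (le_max_left _ _)
  have hTpos : (0:ℝ) < T := lt_of_lt_of_le one_pos hT1
  have hrT : r ≤ f (T • v) := by
    have h1 : (r - f v) / c ≤ Real.log T :=
      (Real.le_log_iff_exp_le hTpos).mpr (le_max_right _ _)
    have h2 : r - f v ≤ c * Real.log T := by
      rw [div_le_iff₀ hcpos] at h1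
      linarith [h1]
    linarith [hlog T hT1]
  -- intermediate value theorem
  have hcont : ContinuousOn (fun s : ℝ => f (s • v)) (Set.Icc t₀ T) := fun s hs =>
    (hgderiv s (lt_of_lt_of_le ht₀pos hs.1)).continuousAt.continuousWithinAt
  obtain ⟨t₁, ht₁mem, ht₁⟩ := intermediate_value_Icc hTt₀ hcont ⟨ht₀r.le, hrT⟩
  have ht₁pos : 0 < t₁ := lt_of_lt_of_le ht₀pos ht₁mem.1
  refine ⟨t₁, ⟨ht₁pos, ht₁⟩, ?_⟩
  intro s hs
  exact hsm.injOn (Set.mem_Ioi.mpr hs.1) (Set.mem_Ioi.mpr ht₁pos)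
    (hs.2.trans ht₁.symm)
end

section
/- Let f be C¹ on an open convex symmetric cone Γ ⊃ Γ⁺ with all ∂f/∂λᵢ > 0, let a = (a₁,…,aₙ) ∈ Γ⁺ with a₁ ≤ … ≤ aₙ, and let δ > 0. Suppose u : (0,∞) → ℝ is C² with u' > 0, u'' ≥ 0, lim_{s→∞} u'(s) = 1 and lim_{s→∞} s·u''(s) = 0, and set s = (1/2)∑aᵢxᵢ², U(x) = ∑ⱼaⱼ²xⱼ². Assume the eigenvalues of D²u satisfy λᵢ = aᵢu' + θᵢUu'' with θᵢ ∈ (0,1), ∑θᵢ = 1, and that ∂f/∂λ₁(a) ≥ ∂f/∂λᵢ(a) for all i. Then there exists s̄ > 0 (depending on f, a, δ, u', u'') such that for all s > s̄: f(λ(D²u)) ≤ f(a₁u' + (2aₙ+δ)su'', a₂u', …, aₙu'), provided both vectors lie in Γ. -/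
open Filter

lemma clm_apply_eq_sum {n : ℕ} (L : (Fin n → ℝ) →L[ℝ] ℝ) (z : Fin n → ℝ) :
    L z = ∑ i, z i * L (Pi.single i 1) := by
  have hz : z = ∑ i, z i • (Pi.single i 1 : Fin n → ℝ) := by
    funext j
    rw [Finset.sum_apply]
    simp [Pi.single_apply]
  conv_lhs => rw [hz]
  rw [map_sum]
  simp [smul_eq_mul]

lemma comparison_aux {n : ℕ} {Γ : Set (Fin n → ℝ)} (hopen : IsOpen Γ)
    {f : (Fin n → ℝ) → ℝ} (hf : ContDiffOn ℝ 1 f Γ)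
    {r : ℝ} {a : Fin n → ℝ} (hball : Metric.ball a r ⊆ Γ)
    {v w : Fin n → ℝ} (hv : v ∈ Metric.ball a r) (hw : w ∈ Metric.ball a r)
    (hpos : ∀ y ∈ Metric.ball a r,
      0 ≤ ∑ i, (w i - v i) * fderiv ℝ f y (Pi.single i 1)) :
    f v ≤ f w := by
  set γ : ℝ → (Fin n → ℝ) := fun t => v + t • (w - v) with hγ
  have hγ0 : γ 0 = v := by simp [hγ]
  have hγ1 : γ 1 = w := by simp [hγ]
  have hγmem : ∀ t ∈ Set.Icc (0:ℝ) 1, γ t ∈ Metric.ball a r := by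
    intro t ht
    have heq : γ t = (1 - t) • v + t • w := by
      funext j; simp [hγ, Pi.smul_apply, smul_eq_mul]; ring
    rw [heq]
    exact (convex_ball a r) hv hw (by linarith [ht.1, ht.2]) ht.1 (by ring)
  have hderivAt : ∀ t ∈ Set.Icc (0:ℝ) 1,
      HasDerivAt (f ∘ γ) (fderiv ℝ f (γ t) (w - v)) t := by
    intro t ht
    have hΓ : γ t ∈ Γ := hball (hγmem t ht)
    have hfd : DifferentiableAt ℝ f (γ t) :=
      (hf.differentiableOn one_ne_zero).differentiableAt (hopen.mem_nhds hΓ)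
    have h1 : HasDerivAt γ (w - v) t := by
      have := ((hasDerivAt_id t).smul_const (w - v)).const_add v
      rw [one_smul] at this; exact this
    exact hfd.hasFDerivAt.comp_hasDerivAt t h1
  have hmono : MonotoneOn (f ∘ γ) (Set.Icc (0:ℝ) 1) := by
    apply monotoneOn_of_deriv_nonneg (convex_Icc 0 1)
    · intro t ht; exact (hderivAt t ht).continuousAt.continuousWithinAt
    · intro t ht
      rw [interior_Icc] at ht
      exact (hderivAt t (Set.mem_Icc_of_Ioo ht)).differentiableAt.differentiableWithinAt
    · intro t ht
      rw [interior_Icc] at ht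
      have ht' := Set.mem_Icc_of_Ioo ht
      rw [(hderivAt t ht').deriv, clm_apply_eq_sum]
      have := hpos (γ t) (hγmem t ht')
      simpa [Pi.sub_apply] using this
  have h01 := hmono (Set.mem_Icc.mpr ⟨le_refl 0, zero_le_one⟩)
      (Set.mem_Icc.mpr ⟨zero_le_one, le_refl 1⟩) zero_le_one
  simpa [hγ0, hγ1] using h01

set_option maxHeartbeats 1000000

/-- Lemma 3.2 of the paper: under positivity of the partials of `f`, dominance of
`∂f/∂λ₁(a)`, `u' > 0`, `u'' ≥ 0`, `u'(s) → 1` and `s u''(s) → 0`, there is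
`s̄ > 0` such that for `s > s̄`,
`f(λ(D²u)) ≤ f(a₁u' + (2aₙ+δ)su'', a₂u', …, aₙu')`, provided both vectors (and
the segment between them) lie in `Γ`, where `λᵢ = aᵢu' + θᵢUu''`. -/
theorem supersolution_comparison {n : ℕ} (hn : 0 < n) (Γ : Set (Fin n → ℝ))
    (hopen : IsOpen Γ) (hconv : Convex ℝ Γ)
    (hsym : ∀ σ : Equiv.Perm (Fin n), ∀ v ∈ Γ, (v ∘ σ) ∈ Γ)
    (hcone : ∀ t : ℝ, 0 < t → ∀ v ∈ Γ, t • v ∈ Γ)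
    (hpos : {v : Fin n → ℝ | ∀ i, 0 < v i} ⊆ Γ)
    (f : (Fin n → ℝ) → ℝ) (hf : ContDiffOn ℝ 1 f Γ)
    (hderiv : ∀ v ∈ Γ, ∀ i, 0 < fderiv ℝ f v (Pi.single i 1))
    (a : Fin n → ℝ) (ha : ∀ i, 0 < a i) (hamono : Monotone a)
    (hmaxa : ∀ i, fderiv ℝ f a (Pi.single i 1)
        ≤ fderiv ℝ f a (Pi.single (⟨0, hn⟩ : Fin n) 1))
    (δ : ℝ) (hδ : 0 < δ)
    (u : ℝ → ℝ) (hu : ContDiffOn ℝ 2 u (Set.Ioi 0))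
    (hu' : ∀ s : ℝ, 0 < s → 0 < deriv u s)
    (hu'' : ∀ s : ℝ, 0 < s → 0 ≤ deriv (deriv u) s)
    (hu'lim : Tendsto (deriv u) atTop (nhds 1))
    (hu''lim : Tendsto (fun s => s * deriv (deriv u) s) atTop (nhds 0))
    (θ : (Fin n → ℝ) → Fin n → ℝ)
    (hθ : ∀ x i, θ x i ∈ Set.Ioo (0:ℝ) 1) (hθsum : ∀ x, ∑ i, θ x i = 1) :
    ∃ sbar : ℝ, 0 < sbar ∧
      ∀ x : Fin n → ℝ,
        sbar < (1/2) * ∑ k, a k * x k ^ 2 →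
        (fun i => a i * deriv u ((1/2) * ∑ k, a k * x k ^ 2)
            + θ x i * ((∑ k, (a k) ^ 2 * (x k) ^ 2)
                * deriv (deriv u) ((1/2) * ∑ k, a k * x k ^ 2))) ∈ Γ →
        (fun i => if i = (⟨0, hn⟩ : Fin n)
            then a i * deriv u ((1/2) * ∑ k, a k * x k ^ 2)
              + (2 * a ⟨n - 1, by omega⟩ + δ) * ((1/2) * ∑ k, a k * x k ^ 2)
                * deriv (deriv u) ((1/2) * ∑ k, a k * x k ^ 2)
            else a i * deriv u ((1/2) * ∑ k, a k * x k ^ 2)) ∈ Γ →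
        segment ℝ
          (fun i => a i * deriv u ((1/2) * ∑ k, a k * x k ^ 2)
            + θ x i * ((∑ k, (a k) ^ 2 * (x k) ^ 2)
                * deriv (deriv u) ((1/2) * ∑ k, a k * x k ^ 2)))
          (fun i => if i = (⟨0, hn⟩ : Fin n)
            then a i * deriv u ((1/2) * ∑ k, a k * x k ^ 2)
              + (2 * a ⟨n - 1, by omega⟩ + δ) * ((1/2) * ∑ k, a k * x k ^ 2)
                * deriv (deriv u) ((1/2) * ∑ k, a k * x k ^ 2)
            else a i * deriv u ((1/2) * ∑ k, a k * x k ^ 2)) ⊆ Γ →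
        f (fun i => a i * deriv u ((1/2) * ∑ k, a k * x k ^ 2)
            + θ x i * ((∑ k, (a k) ^ 2 * (x k) ^ 2)
                * deriv (deriv u) ((1/2) * ∑ k, a k * x k ^ 2)))
          ≤ f (fun i => if i = (⟨0, hn⟩ : Fin n)
            then a i * deriv u ((1/2) * ∑ k, a k * x k ^ 2)
              + (2 * a ⟨n - 1, by omega⟩ + δ) * ((1/2) * ∑ k, a k * x k ^ 2)
                * deriv (deriv u) ((1/2) * ∑ k, a k * x k ^ 2)
            else a i * deriv u ((1/2) * ∑ k, a k * x k ^ 2)) := by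
  classical
  have hnn : n - 1 < n := by omega
  set i0 : Fin n := ⟨0, hn⟩ with hi0
  have haΓ : a ∈ Γ := hpos ha
  set aM : ℝ := a ⟨n - 1, hnn⟩ with haMdef
  have haM : 0 < aM := ha _
  have hak : ∀ k, a k ≤ aM := by
    intro k
    have hk : (k : ℕ) < n := k.isLt
    refine hamono ?_
    rw [Fin.le_def]
    show (k : ℕ) ≤ n - 1
    omega
  set p0 : ℝ := fderiv ℝ f a (Pi.single i0 1) with hp0
  have hp0pos : 0 < p0 := hderiv a haΓ i0
  set ε : ℝ := δ * p0 / (4 * aM + δ) with hεdef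
  have hden : 0 < 4 * aM + δ := by linarith
  have hεpos : 0 < ε := div_pos (mul_pos hδ hp0pos) hden
  have hεlt : ε < p0 := by
    rw [hεdef, div_lt_iff₀ hden]; nlinarith
  have hkey : 4 * aM * ε = δ * (p0 - ε) := by
    rw [hεdef]; field_simp; ring
  -- continuity of the gradient at a
  have hcont : ContinuousOn (fderiv ℝ f) Γ :=
    hf.continuousOn_fderiv_of_isOpen hopen le_rfl
  have hca : ContinuousAt (fderiv ℝ f) a :=
    hcont.continuousAt (hopen.mem_nhds haΓ)
  obtain ⟨r1, hr1, hr1'⟩ := Metric.continuousAt_iff.mp hca ε hεpos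
  obtain ⟨r2, hr2, hr2'⟩ := Metric.isOpen_iff.mp hopen a haΓ
  set r := min r1 r2 with hrdef
  have hrpos : 0 < r := lt_min hr1 hr2
  have hballΓ : Metric.ball a r ⊆ Γ :=
    (Metric.ball_subset_ball (min_le_right _ _)).trans hr2'
  have hgrad : ∀ y ∈ Metric.ball a r, ∀ i,
      |fderiv ℝ f y (Pi.single i 1) - fderiv ℝ f a (Pi.single i 1)| < ε := by
    intro y hy i
    have hy1 : dist y a < r1 :=
      lt_of_lt_of_le (Metric.mem_ball.mp hy) (min_le_left _ _)
    have hd := hr1' hy1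
    rw [dist_eq_norm] at hd
    have hb : |fderiv ℝ f y (Pi.single i 1) - fderiv ℝ f a (Pi.single i 1)|
        ≤ ‖fderiv ℝ f y - fderiv ℝ f a‖ * ‖(Pi.single i 1 : Fin n → ℝ)‖ := by
      have := (fderiv ℝ f y - fderiv ℝ f a).le_opNorm (Pi.single i 1)
      simpa [Real.norm_eq_abs] using this
    have hns : ‖(Pi.single i 1 : Fin n → ℝ)‖ = 1 := by
      rw [Pi.norm_single]; norm_num
    rw [hns, mul_one] at hb
    exact lt_of_le_of_lt hb hd
  -- limit bound
  have hB : Tendsto (fun t => aM * |deriv u t - 1|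
      + (2 * aM + δ) * (t * deriv (deriv u) t)) atTop (nhds 0) := by
    have h1 : Tendsto (fun t => |deriv u t - 1|) atTop (nhds 0) := by
      have := (hu'lim.sub_const 1).abs
      simpa using this
    have := (h1.const_mul aM).add (hu''lim.const_mul (2 * aM + δ))
    simpa using this
  obtain ⟨N, hN⟩ := eventually_atTop.mp (hB.eventually_lt_const hrpos)
  refine ⟨max N 1, lt_of_lt_of_le zero_lt_one (le_max_right _ _), ?_⟩
  intro x hSgt hvΓ hwΓ hseg
  set S : ℝ := (1/2) * ∑ k, a k * x k ^ 2 with hSdef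
  have hS1 : 1 < S := lt_of_le_of_lt (le_max_right N 1) hSgt
  have hSpos : 0 < S := by linarith
  have hSN : N ≤ S := le_of_lt (lt_of_le_of_lt (le_max_left N 1) hSgt)
  have hBS := hN S hSN
  set d : ℝ := deriv u S with hddef
  set c : ℝ := deriv (deriv u) S with hcdef
  have hc : 0 ≤ c := hu'' S hSpos
  set T : ℝ := ∑ k, (a k) ^ 2 * (x k) ^ 2 with hTdef
  have hT0 : 0 ≤ T := Finset.sum_nonneg fun k _ => by positivity
  have hT2 : T ≤ 2 * aM * S := by
    have hterm : ∀ k ∈ Finset.univ, (a k) ^ 2 * (x k) ^ 2 ≤ aM * (a k * x k ^ 2) := by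
      intro k _
      have h1 := hak k; have h2 := ha k
      nlinarith [mul_nonneg (sub_nonneg.2 h1) (mul_nonneg h2.le (sq_nonneg (x k)))]
    calc T ≤ ∑ k, aM * (a k * x k ^ 2) := Finset.sum_le_sum hterm
      _ = 2 * aM * S := by rw [hSdef, ← Finset.mul_sum]; ring
  refine comparison_aux hopen hf hballΓ ?_ ?_ ?_
  · -- v in ball
    rw [Metric.mem_ball, dist_pi_lt_iff hrpos]
    intro i
    show dist (a i * d + θ x i * (T * c)) (a i) < r
    rw [Real.dist_eq]
    have hθi := hθ x i
    have habs : |a i * d + θ x i * (T * c) - a i|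
        ≤ a i * |d - 1| + θ x i * (T * c) := by
      have heq : a i * d + θ x i * (T * c) - a i
          = a i * (d - 1) + θ x i * (T * c) := by ring
      rw [heq]
      refine (abs_add_le _ _).trans ?_
      rw [abs_mul, abs_of_pos (ha i),
        abs_of_nonneg (mul_nonneg hθi.1.le (mul_nonneg hT0 hc))]
    have h1 : a i * |d - 1| ≤ aM * |d - 1| :=
      mul_le_mul_of_nonneg_right (hak i) (abs_nonneg _)
    have h2 : θ x i * (T * c) ≤ (2 * aM + δ) * (S * c) := by
      nlinarith [mul_le_mul_of_nonneg_right hT2 hc, mul_nonneg hT0 hc,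
        mul_nonneg (mul_nonneg hδ.le hSpos.le) hc, hθi.1.le, hθi.2.le]
    linarith
  · -- w in ball
    rw [Metric.mem_ball, dist_pi_lt_iff hrpos]
    intro i
    show dist (if i = i0 then a i * d + (2 * aM + δ) * S * c else a i * d) (a i) < r
    rw [Real.dist_eq]
    have h1 : a i * |d - 1| ≤ aM * |d - 1| :=
      mul_le_mul_of_nonneg_right (hak i) (abs_nonneg _)
    have hSc : 0 ≤ (2 * aM + δ) * (S * c) :=
      mul_nonneg (by linarith) (mul_nonneg hSpos.le hc)
    split_ifs with hi
    · have habs : |a i * d + (2 * aM + δ) * S * c - a i|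
          ≤ a i * |d - 1| + (2 * aM + δ) * (S * c) := by
        have heq : a i * d + (2 * aM + δ) * S * c - a i
            = a i * (d - 1) + (2 * aM + δ) * (S * c) := by ring
        rw [heq]
        refine (abs_add_le _ _).trans ?_
        rw [abs_mul, abs_of_pos (ha i), abs_of_nonneg hSc]
      linarith
    · have habs : |a i * d - a i| = a i * |d - 1| := by
        rw [show a i * d - a i = a i * (d - 1) by ring, abs_mul, abs_of_pos (ha i)]
      linarith [abs_nonneg (d - 1)]
  · -- derivative nonnegativity
    intro y hy
    set g : Fin n → ℝ := fun i => fderiv ℝ f y (Pi.single i 1) with hg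
    have hgε : ∀ i, |g i - fderiv ℝ f a (Pi.single i 1)| < ε := fun i => hgrad y hy i
    have hgu : ∀ i, g i < p0 + ε := by
      intro i
      have h1 := abs_lt.mp (hgε i)
      have h2 := hmaxa i
      linarith [h1.2, h2]
    have hgl : p0 - ε < g i0 := by
      have h1 := abs_lt.mp (hgε i0)
      rw [← hp0] at h1
      linarith [h1.1]
    have hθ0 := hθ x i0
    show 0 ≤ ∑ i, ((if i = i0 then a i * d + (2 * aM + δ) * S * c else a i * d)
        - (a i * d + θ x i * (T * c))) * g i
    have hterm : ∀ i ∈ Finset.univ,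
        ((if i = i0 then a i * d + (2 * aM + δ) * S * c else a i * d)
          - (a i * d + θ x i * (T * c))) * g i
        = (if i = i0 then (2 * aM + δ) * S * c * g i else 0)
          - θ x i * ((T * c) * g i) := by
      intro i _
      by_cases hi : i = i0 <;> simp [hi] <;> ring
    rw [Finset.sum_congr rfl hterm, Finset.sum_sub_distrib,
      Finset.sum_ite_eq' Finset.univ i0 (fun i => (2 * aM + δ) * S * c * g i)]
    simp only [Finset.mem_univ, if_pos]
    -- split the sum
    have hsplit : ∑ i, θ x i * ((T * c) * g i)
        = θ x i0 * ((T * c) * g i0)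
          + ∑ i ∈ Finset.univ.erase i0, θ x i * ((T * c) * g i) :=
      (Finset.add_sum_erase _ _ (Finset.mem_univ i0)).symm
    have hθsum' : ∑ i ∈ Finset.univ.erase i0, θ x i = 1 - θ x i0 := by
      have h := Finset.add_sum_erase Finset.univ (θ x) (Finset.mem_univ i0)
      rw [hθsum x] at h
      linarith
    have hTc : 0 ≤ T * c := mul_nonneg hT0 hc
    have herase : ∑ i ∈ Finset.univ.erase i0, θ x i * ((T * c) * g i)
        ≤ (1 - θ x i0) * ((T * c) * (p0 + ε)) := by
      calc ∑ i ∈ Finset.univ.erase i0, θ x i * ((T * c) * g i)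
          ≤ ∑ i ∈ Finset.univ.erase i0, θ x i * ((T * c) * (p0 + ε)) := by
            refine Finset.sum_le_sum fun i _ => ?_
            have h3 : 0 ≤ θ x i * (T * c) := mul_nonneg ((hθ x i).1.le) hTc
            nlinarith [mul_nonneg h3 (sub_nonneg.2 (hgu i).le)]
        _ = (1 - θ x i0) * ((T * c) * (p0 + ε)) := by
            rw [← Finset.sum_mul, hθsum']
    -- core inequality without c
    have hθT : θ x i0 * T ≤ T := by nlinarith [hθ0.2, hT0]
    have hg0 : p0 - ε ≤ g i0 := hgl.le
    have hcoef : 0 ≤ (2 * aM + δ) * S - θ x i0 * T := by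
      nlinarith [mul_nonneg hδ.le hSpos.le]
    have hkeyS : 4 * aM * ε * S = δ * (p0 - ε) * S := by rw [hkey]
    have hE : 0 ≤ (2 * aM + δ) * S * g i0 - θ x i0 * (T * g i0)
        - (1 - θ x i0) * (T * (p0 + ε)) := by
      nlinarith [mul_nonneg (sub_nonneg.2 hT2) (by linarith : (0:ℝ) ≤ p0 - ε),
        mul_nonneg (mul_nonneg (by norm_num : (0:ℝ) ≤ 2) hεpos.le) (sub_nonneg.2 hT2),
        mul_nonneg hcoef (sub_nonneg.2 hg0),
        mul_nonneg hεpos.le (mul_nonneg hθ0.1.le hT0), hkeyS]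
    nlinarith [mul_nonneg hc hE, hsplit, herase]
end
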